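/- Let s > 0, let P satisfy H1, and let x₀ > 0. If γ is a positive solution of the Dyson–Schwinger ODE on [x₀, ∞), then for every x ≥ x₀: γ(x) ≤ x^{1/s} · ( (1 + γ(x₀))/x₀^{1/s} − (x₀^{1/s} / (s·(1 + γ(x₀)))) · ∫_{x₀}^x P(z)·z^{−1−2/s} dz ) − 1. -/

import Mathlib

open Real MeasureTheory Filter Set

noncomputable section

/-- `γ` is a positive solution of the Dyson–Schwinger ODE
`γ'(x) = (γ(x) + γ(x)² − P(x)) / (s·x·γ(x))` on the set `I`. -/
def IsDSSolution (s : ℝ) (P γ : ℝ → ℝ) (I : Set ℝ) : Prop :=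
  (∀ x ∈ I, 0 < γ x) ∧
    ∀ x ∈ I, HasDerivWithinAt γ ((γ x + (γ x) ^ 2 - P x) / (s * x * γ x)) I x

/-- Hypothesis H1: `P` is twice continuously differentiable on `[0,∞)`,
`P 0 = 0`, and `P x > 0` for `x > 0`. -/
def H1 (P : ℝ → ℝ) : Prop :=
  ContDiffOn ℝ 2 P (Set.Ici 0) ∧ P 0 = 0 ∧ ∀ x > (0 : ℝ), 0 < P x

/-- Hypothesis H2: `P` is strictly increasing on `[0,∞)`. -/
def H2 (P : ℝ → ℝ) : Prop := StrictMonoOn P (Set.Ici 0)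

/-- The nullcline `γ_c(x) = (√(1 + 4 P x) − 1)/2`. -/
def gammaC (P : ℝ → ℝ) (x : ℝ) : ℝ := (Real.sqrt (1 + 4 * P x) - 1) / 2

theorem stmt_5 (s : ℝ) (hs : 0 < s) (P : ℝ → ℝ) (hP : H1 P) (x₀ : ℝ) (hx₀ : 0 < x₀)
    (γ : ℝ → ℝ) (hγ : IsDSSolution s P γ (Set.Ici x₀)) :
    ∀ x ≥ x₀,
      γ x ≤ x ^ (1 / s) * ((1 + γ x₀) / x₀ ^ (1 / s) -
        x₀ ^ (1 / s) / (s * (1 + γ x₀)) * ∫ z in x₀..x, P z / z ^ (1 + 2 / s)) - 1 := by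
  obtain ⟨hpos, hderiv⟩ := hγ
  set h : ℝ → ℝ := fun z => (1 + γ z) / z ^ (1 / s) with hh
  set h' : ℝ → ℝ := fun z => -(P z) / (s * z * γ z * z ^ (1 / s)) with hh'
  -- positivity facts
  have hzpos : ∀ z ∈ Ici x₀, 0 < z := fun z hz => lt_of_lt_of_le hx₀ hz
  -- derivative of h
  have hd : ∀ z ∈ Ici x₀, HasDerivWithinAt h (h' z) (Ici x₀) z := by
    intro z hz
    have hz0 : 0 < z := hzpos z hz
    have hT : (0:ℝ) < z ^ (1 / s) := Real.rpow_pos_of_pos hz0 _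
    have hg : HasDerivWithinAt (fun z : ℝ => z ^ (1 / s))
        ((1 / s) * z ^ (1 / s - 1)) (Ici x₀) z :=
      (Real.hasDerivAt_rpow_const (Or.inl hz0.ne')).hasDerivWithinAt
    have hf : HasDerivWithinAt (fun z => 1 + γ z)
        ((γ z + (γ z) ^ 2 - P z) / (s * z * γ z)) (Ici x₀) z :=
      (hderiv z hz).const_add 1
    have hpow : z ^ (1 / s - 1) = z ^ (1 / s) / z := by
      rw [Real.rpow_sub hz0, Real.rpow_one]
    rw [hpow] at hg
    have ha : γ z ≠ 0 := (hpos z hz).ne'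
    have key := hf.div hg hT.ne'
    have heq : ((γ z + γ z ^ 2 - P z) / (s * z * γ z) * z ^ (1 / s) -
        (1 + γ z) * (1 / s * (z ^ (1 / s) / z))) / (z ^ (1 / s)) ^ 2 = h' z := by
      simp only [hh']
      set T := z ^ (1 / s) with hTdef
      field_simp
      ring
    rw [heq] at key
    exact key
  -- continuity of h on Ici x₀
  have hcont : ContinuousOn h (Ici x₀) := fun z hz => ((hd z hz).differentiableWithinAt).continuousWithinAt
  -- monotonicity: h z ≤ h x₀ for z ≥ x₀
  have hmono : ∀ z ∈ Ici x₀, h z ≤ h x₀ := by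
    intro z hz
    have hab : x₀ ≤ z := hz
    have key : h z - h x₀ ≤ ∫ y in x₀..z, (0:ℝ) := by
      apply intervalIntegral.sub_le_integral_of_hasDeriv_right_of_le hab
        (hcont.mono (Icc_subset_Ici_self))
        (fun y hy => (hd y (le_of_lt hy.1)).mono (fun t ht => le_trans (le_of_lt hy.1) (le_of_lt ht)))
        (integrableOn_const measure_Icc_lt_top.ne)
      intro y hy
      have hy0 : 0 < y := lt_trans hx₀ hy.1
      have hPpos : 0 < P y := hP.2.2 y hy0
      have hγy : 0 < γ y := hpos y (le_of_lt hy.1)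
      have hT : (0:ℝ) < y ^ (1 / s) := Real.rpow_pos_of_pos hy0 _
      have : 0 < s * y * γ y * y ^ (1 / s) := by positivity
      simp only [hh']
      exact le_of_lt (div_neg_of_neg_of_pos (neg_neg_iff_pos.2 hPpos) this)
    have hz0' : (∫ y in x₀..z, (0:ℝ)) = 0 := by simp
    linarith [key, hz0'.le]
  -- main step
  intro x hx
  have hxpos : 0 < x := lt_of_lt_of_le hx₀ hx
  have hγ0 : 0 < γ x₀ := hpos x₀ Set.self_mem_Ici
  have h1γ : 0 < 1 + γ x₀ := by linarith
  have hX₀ : (0:ℝ) < x₀ ^ (1 / s) := Real.rpow_pos_of_pos hx₀ _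
  set c : ℝ := x₀ ^ (1 / s) / (s * (1 + γ x₀)) with hc
  have hcpos : 0 < c := by positivity
  have key : h x - h x₀ ≤ ∫ y in x₀..x, -(c * (P y / y ^ (1 + 2 / s))) := by
    apply intervalIntegral.sub_le_integral_of_hasDeriv_right_of_le hx
      (hcont.mono (Icc_subset_Ici_self))
      (fun y hy => (hd y (le_of_lt hy.1)).mono (fun t ht => le_trans (le_of_lt hy.1) (le_of_lt ht)))
    · -- integrability
      have contP : ContinuousOn P (Icc x₀ x) :=
        (hP.1.continuousOn).mono (fun y hy => le_trans hx₀.le hy.1)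
      have contq : ContinuousOn (fun y : ℝ => y ^ (1 + 2 / s)) (Icc x₀ x) :=
        ContinuousOn.rpow_const continuousOn_id
          (fun y hy => Or.inl (lt_of_lt_of_le hx₀ hy.1).ne')
      have hne : ∀ y ∈ Icc x₀ x, y ^ (1 + 2 / s) ≠ 0 :=
        fun y hy => (Real.rpow_pos_of_pos (lt_of_lt_of_le hx₀ hy.1) _).ne'
      exact ((continuousOn_const.mul (contP.div contq hne)).neg).integrableOn_Icc
    · -- pointwise bound
      intro y hy
      have hy₀ : x₀ ≤ y := le_of_lt hy.1
      have hy0 : 0 < y := lt_of_le_of_lt hx₀.le hy.1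
      have hPpos : 0 < P y := hP.2.2 y hy0
      have hγy : 0 < γ y := hpos y hy₀
      have hT : (0:ℝ) < y ^ (1 / s) := Real.rpow_pos_of_pos hy0 _
      -- from monotonicity: (1 + γ y) * x₀^{1/s} ≤ (1 + γ x₀) * y^{1/s}
      have hm := hmono y hy₀
      rw [hh, div_le_div_iff₀ hT hX₀] at hm
      -- goal: h' y ≤ -(c * (P y / y ^ (1+2/s)))
      have hpow : y ^ (1 + 2 / s) = y * (y ^ (1 / s)) ^ 2 := by
        rw [show (1 + 2 / s) = 1 + (1/s + 1/s) by ring, Real.rpow_add hy0,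
          Real.rpow_add hy0, Real.rpow_one]
        ring
      simp only [hh', hc, hpow]
      rw [neg_div, neg_le_neg_iff, div_mul_div_comm,
        div_le_div_iff₀ (by positivity) (by positivity)]
      have h1 : γ y * x₀ ^ (1 / s) ≤ (1 + γ x₀) * y ^ (1 / s) := by nlinarith
      have e := mul_le_mul_of_nonneg_left h1
        (le_of_lt (show (0:ℝ) < s * y * P y * y ^ (1 / s) by positivity))
      nlinarith [e]
  -- rearrange
  rw [intervalIntegral.integral_neg, intervalIntegral.integral_const_mul] at key
  have hxT : (0:ℝ) < x ^ (1 / s) := Real.rpow_pos_of_pos hxpos _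
  have hhx : h x * x ^ (1 / s) = 1 + γ x := div_mul_cancel₀ _ hxT.ne'
  have hfin : h x ≤ (1 + γ x₀) / x₀ ^ (1 / s) - c * ∫ z in x₀..x, P z / z ^ (1 + 2/s) := by
    simp only [hh] at key ⊢
    linarith
  have := mul_le_mul_of_nonneg_right hfin hxT.le
  rw [hhx] at this
  rw [hc] at this
  linarith [this]
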